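/- Assume Σ_{m ≤ M, q | m} m K_m(a) ≪ M^{3/2}(Mq^{-2})^γ (Mq)^{o(1)} uniformly in q ≥ 1, with 0 < γ ≤ 1/2. Then Σ_{m=1}^{M} K_m(a) φ(m) ≪ M^{3/2+γ+o(1)}, where φ is the Euler totient function. -/

import Mathlib

open Finset

noncomputable def Kl (m : ℕ) (a : ℤ) : ℂ :=
  (1 / Real.sqrt m) * ∑ x ∈ (Finset.range m).filter (fun x => Nat.Coprime x m),
    Complex.exp (2 * Real.pi * Complex.I *
      (((a * (x : ℤ) + ((((x : ZMod m)⁻¹ : ZMod m)).val : ℤ) : ℤ) : ℂ) / (m : ℂ)))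

open ArithmeticFunction
open scoped ArithmeticFunction.Moebius

lemma totient_moebius (m : ℕ) (hm : 0 < m) :
    (Nat.totient m : ℂ) = ∑ d ∈ m.divisors, (μ d : ℂ) * ((m / d : ℕ) : ℂ) := by
  have h := (ArithmeticFunction.sum_eq_iff_sum_mul_moebius_eq
    (R := ℂ) (f := fun n => (Nat.totient n : ℂ)) (g := fun n => (n : ℂ))).mp ?_ m hm
  · rw [← h, Nat.sum_divisorsAntidiagonal (fun d e => (μ d : ℂ) * (e : ℂ))]
  · intro n hn
    rw [← Nat.cast_sum, Nat.sum_totient]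

/-- Assuming the Kloosterman average bound in progressions with weight `m`, Kloosterman sums
do not correlate with the Euler totient: `∑_{m ≤ M} K_m(a) φ(m) ≪ M^(3/2 + γ + o(1))`. -/
theorem stmt_9 (a : ℤ) (ha : a ≠ 0) (γ : ℝ) (hγ0 : 0 < γ) (hγ1 : γ ≤ 1 / 2)
    (H : ∀ ε : ℝ, 0 < ε → ∃ C : ℝ, ∀ q M : ℕ, 1 ≤ q → 1 ≤ M →
      ‖∑ m ∈ (Finset.Icc 1 M).filter (fun m => q ∣ m), (m : ℂ) * Kl m a‖ ≤
        C * (M : ℝ) ^ ((3 : ℝ) / 2) * ((M : ℝ) / (q : ℝ) ^ 2) ^ γ * ((M : ℝ) * (q : ℝ)) ^ ε) :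
    ∀ ε : ℝ, 0 < ε → ∃ C : ℝ, ∀ M : ℕ, 1 ≤ M →
      ‖∑ m ∈ Finset.Icc 1 M, Kl m a * (Nat.totient m : ℂ)‖ ≤
        C * (M : ℝ) ^ ((3 : ℝ) / 2 + γ + ε) := by
  intro ε hε
  set δ := min ε γ with hδdef
  have hδ0 : 0 < δ := lt_min hε hγ0
  have hδε : δ ≤ ε := min_le_left _ _
  have hδγ : δ ≤ γ := min_le_right _ _
  obtain ⟨C, hC⟩ := H δ hδ0
  set C' := max C 0 with hC'def
  have hC'0 : 0 ≤ C' := le_max_right _ _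
  have hsum : Summable (fun d : ℕ => (d : ℝ) ^ (-(1 + γ))) :=
    Real.summable_nat_rpow.2 (by linarith)
  set Z := ∑' d : ℕ, (d : ℝ) ^ (-(1 + γ)) with hZdef
  have hZ0 : 0 ≤ Z := tsum_nonneg fun d => Real.rpow_nonneg (Nat.cast_nonneg d) _
  refine ⟨C' * Z, fun M hM => ?_⟩
  have hMr : (1 : ℝ) ≤ (M : ℝ) := by exact_mod_cast hM
  have hMr0 : (0 : ℝ) < (M : ℝ) := lt_of_lt_of_le one_pos hMr
  -- the key rearrangement
  have key : ∑ m ∈ Finset.Icc 1 M, Kl m a * (Nat.totient m : ℂ)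
      = ∑ d ∈ Finset.Icc 1 M, ((μ d : ℂ) / (d : ℂ)) *
          ∑ m ∈ (Finset.Icc 1 M).filter (fun m => d ∣ m), (m : ℂ) * Kl m a := by
    have step1 : ∀ m ∈ Finset.Icc 1 M, Kl m a * (Nat.totient m : ℂ)
        = ∑ d ∈ Finset.Icc 1 M, (if d ∣ m then ((μ d : ℂ) / (d : ℂ)) * ((m : ℂ) * Kl m a) else 0) := by
      intro m hm
      rw [Finset.mem_Icc] at hm
      have hm0 : 0 < m := hm.1
      have hdvd : m.divisors = (Finset.Icc 1 M).filter (fun d => d ∣ m) := by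
        ext d
        simp only [Nat.mem_divisors, Finset.mem_filter, Finset.mem_Icc]
        constructor
        · rintro ⟨hd, -⟩
          exact ⟨⟨Nat.one_le_iff_ne_zero.2 (fun h => by simp [h] at hd; omega),
            le_trans (Nat.le_of_dvd hm0 hd) hm.2⟩, hd⟩
        · rintro ⟨-, hd⟩
          exact ⟨hd, hm0.ne'⟩
      rw [totient_moebius m hm0, hdvd, Finset.sum_filter, Finset.mul_sum]
      refine Finset.sum_congr rfl fun d hd => ?_
      rw [Finset.mem_Icc] at hd
      have hd0 : (d : ℂ) ≠ 0 := by
        exact_mod_cast (Nat.one_le_iff_ne_zero.1 hd.1)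
      by_cases h : d ∣ m
      · simp only [h, if_true]
        rw [Nat.cast_div h hd0]
        field_simp
      · simp [h]
    rw [Finset.sum_congr rfl step1, Finset.sum_comm]
    refine Finset.sum_congr rfl fun d hd => ?_
    rw [Finset.mul_sum, Finset.sum_filter]
  rw [key]
  have hbound : ∀ d ∈ Finset.Icc 1 M,
      ‖((μ d : ℂ) / (d : ℂ)) *
          ∑ m ∈ (Finset.Icc 1 M).filter (fun m => d ∣ m), (m : ℂ) * Kl m a‖ ≤
        C' * (M : ℝ) ^ ((3 : ℝ) / 2 + γ + ε) * (d : ℝ) ^ (-(1 + γ)) := by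
    intro d hd
    rw [Finset.mem_Icc] at hd
    have hdr : (1 : ℝ) ≤ (d : ℝ) := by exact_mod_cast hd.1
    have hdr0 : (0 : ℝ) < (d : ℝ) := lt_of_lt_of_le one_pos hdr
    have hμ : ‖((μ d : ℂ) / (d : ℂ))‖ ≤ 1 / (d : ℝ) := by
      rw [norm_div]
      have h1 : ‖((μ d : ℤ) : ℂ)‖ ≤ 1 := by
        rw [Complex.norm_intCast]
        exact_mod_cast ArithmeticFunction.abs_moebius_le_one
      have h2 : ‖((d : ℕ) : ℂ)‖ = (d : ℝ) := by
        rw [Complex.norm_natCast]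
      rw [h2]
      gcongr
    have hS := hC d M hd.1 hM
    have hS' : ‖∑ m ∈ (Finset.Icc 1 M).filter (fun m => d ∣ m), (m : ℂ) * Kl m a‖ ≤
        C' * (M : ℝ) ^ ((3 : ℝ) / 2) * ((M : ℝ) / (d : ℝ) ^ 2) ^ γ * ((M : ℝ) * (d : ℝ)) ^ δ := by
      refine hS.trans ?_
      have hfac : (0:ℝ) ≤ (M : ℝ) ^ ((3 : ℝ) / 2) * ((M : ℝ) / (d : ℝ) ^ 2) ^ γ
          * ((M : ℝ) * (d : ℝ)) ^ δ := by positivity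
      calc C * (M : ℝ) ^ ((3 : ℝ) / 2) * ((M : ℝ) / (d : ℝ) ^ 2) ^ γ * ((M : ℝ) * (d : ℝ)) ^ δ
          = C * ((M : ℝ) ^ ((3 : ℝ) / 2) * ((M : ℝ) / (d : ℝ) ^ 2) ^ γ * ((M : ℝ) * (d : ℝ)) ^ δ) := by ring
        _ ≤ C' * ((M : ℝ) ^ ((3 : ℝ) / 2) * ((M : ℝ) / (d : ℝ) ^ 2) ^ γ * ((M : ℝ) * (d : ℝ)) ^ δ) :=
            mul_le_mul_of_nonneg_right (le_max_left _ _) hfac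
        _ = C' * (M : ℝ) ^ ((3 : ℝ) / 2) * ((M : ℝ) / (d : ℝ) ^ 2) ^ γ * ((M : ℝ) * (d : ℝ)) ^ δ := by ring
    calc ‖((μ d : ℂ) / (d : ℂ)) * ∑ m ∈ (Finset.Icc 1 M).filter (fun m => d ∣ m), (m : ℂ) * Kl m a‖
        = ‖((μ d : ℂ) / (d : ℂ))‖ * ‖∑ m ∈ (Finset.Icc 1 M).filter (fun m => d ∣ m), (m : ℂ) * Kl m a‖ := norm_mul _ _
      _ ≤ (1 / (d : ℝ)) * (C' * (M : ℝ) ^ ((3 : ℝ) / 2) * ((M : ℝ) / (d : ℝ) ^ 2) ^ γ * ((M : ℝ) * (d : ℝ)) ^ δ) :=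
          mul_le_mul hμ hS' (norm_nonneg _) (by positivity)
      _ = C' * ((M : ℝ) ^ ((3 : ℝ) / 2 + γ + δ)) * ((d : ℝ) ^ (δ - 2 * γ - 1)) := by
          rw [Real.div_rpow (le_of_lt hMr0) (by positivity),
            Real.mul_rpow (le_of_lt hMr0) (le_of_lt hdr0),
            ← Real.rpow_natCast (d : ℝ) 2, ← Real.rpow_mul (le_of_lt hdr0)]
          rw [Real.rpow_add hMr0, Real.rpow_add hMr0]
          rw [show (δ - 2 * γ - 1 : ℝ) = δ + (-(((2:ℕ):ℝ) * γ)) + (-1) by push_cast; ring]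
          rw [Real.rpow_add hdr0, Real.rpow_add hdr0, Real.rpow_neg (le_of_lt hdr0),
            Real.rpow_neg (le_of_lt hdr0), Real.rpow_one]
          field_simp
      _ ≤ C' * ((M : ℝ) ^ ((3 : ℝ) / 2 + γ + ε)) * ((d : ℝ) ^ (-(1 + γ))) := by
          refine mul_le_mul (mul_le_mul_of_nonneg_left
            (Real.rpow_le_rpow_of_exponent_le hMr (by linarith)) hC'0)
            (Real.rpow_le_rpow_of_exponent_le hdr (by linarith))
            (by positivity) (by positivity)
  calc ‖∑ d ∈ Finset.Icc 1 M, ((μ d : ℂ) / (d : ℂ)) *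
          ∑ m ∈ (Finset.Icc 1 M).filter (fun m => d ∣ m), (m : ℂ) * Kl m a‖
      ≤ ∑ d ∈ Finset.Icc 1 M, ‖((μ d : ℂ) / (d : ℂ)) *
          ∑ m ∈ (Finset.Icc 1 M).filter (fun m => d ∣ m), (m : ℂ) * Kl m a‖ := norm_sum_le _ _
    _ ≤ ∑ d ∈ Finset.Icc 1 M, C' * (M : ℝ) ^ ((3 : ℝ) / 2 + γ + ε) * (d : ℝ) ^ (-(1 + γ)) :=
        Finset.sum_le_sum hbound
    _ = C' * (M : ℝ) ^ ((3 : ℝ) / 2 + γ + ε) * ∑ d ∈ Finset.Icc 1 M, (d : ℝ) ^ (-(1 + γ)) := by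
        rw [← Finset.mul_sum]
    _ ≤ C' * (M : ℝ) ^ ((3 : ℝ) / 2 + γ + ε) * Z := by
        refine mul_le_mul_of_nonneg_left ?_ (by positivity)
        exact Summable.sum_le_tsum _ (fun d _ => Real.rpow_nonneg (Nat.cast_nonneg d) _) hsum
    _ = C' * Z * (M : ℝ) ^ ((3 : ℝ) / 2 + γ + ε) := by ring
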